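/- Let T be a finite set of odd prime numbers such that the number of elements of T congruent to 3 modulo 4 is odd, and let Q = ℚ(√(∏_{q ∈ T} q)). Then for each q ∈ T, the quadratic extension Q(√q)/Q is unramified at every finite place of Q. -/

import Mathlib

open NumberField Polynomial

-- mod 4 product lemma
lemma aux_mod4 (T : Finset ℕ) (hT : ∀ q ∈ T, q.Prime ∧ Odd q)
    (hT3 : Odd (T.filter (fun q => q % 4 = 3)).card) : (∏ q ∈ T, q) % 4 = 3 := by
  have hz : ((∏ q ∈ T, q : ℕ) : ZMod 4) = 3 := by
    push_cast
    rw [← Finset.prod_filter_mul_prod_filter_not T (fun q => q % 4 = 3)]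
    have h1 : ∀ q ∈ T.filter (fun q => q % 4 = 3), (q : ZMod 4) = 3 := by
      intro x hx
      rw [Finset.mem_filter] at hx
      rw [← ZMod.natCast_mod, hx.2]; rfl
    have h2 : ∀ q ∈ T.filter (fun q => ¬ q % 4 = 3), (q : ZMod 4) = 1 := by
      intro x hx
      rw [Finset.mem_filter] at hx
      have hodd := (hT x hx.1).2
      rw [Nat.odd_iff] at hodd
      have : x % 4 % 2 = x % 2 := Nat.mod_mod_of_dvd x (by norm_num)
      have hx4 : x % 4 = 1 := by omega
      rw [← ZMod.natCast_mod, hx4]; rfl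
    rw [Finset.prod_congr rfl h1, Finset.prod_congr rfl h2, Finset.prod_const,
      Finset.prod_const, one_pow, mul_one]
    obtain ⟨k, hk⟩ := hT3
    rw [hk, pow_succ, pow_mul]
    have h9 : ((3:ZMod 4) ^ 2) = 1 := by decide
    rw [h9, one_pow, one_mul]
  have := ZMod.val_natCast (n := 4) (∏ q ∈ T, q)
  rw [hz] at this
  exact this.symm.trans rfl

-- quadratic minpoly helper
lemma aux_minpoly_quadratic {K L : Type*} [Field K] [Field L] [Algebra K L] {θ : L} {f : K[X]}
    (hf : f.Monic) (hdeg : f.natDegree = 2) (h0 : aeval θ f = 0)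
    (hθ : θ ∉ (algebraMap K L).range) : minpoly K θ = f := by
  have hint : IsIntegral K θ := ⟨f, hf, h0⟩
  have hdvd : minpoly K θ ∣ f := minpoly.dvd K θ h0
  have h2 : 2 ≤ (minpoly K θ).natDegree := (minpoly.two_le_natDegree_iff hint).mpr hθ
  obtain ⟨g, hg⟩ := hdvd
  have hmp : (minpoly K θ).Monic := minpoly.monic hint
  have hg0 : g ≠ 0 := by
    rintro rfl
    rw [mul_zero] at hg
    exact hf.ne_zero hg
  have hdeg' : (minpoly K θ).natDegree + g.natDegree = 2 := by
    rw [← Polynomial.natDegree_mul hmp.ne_zero hg0, ← hg, hdeg]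
  have hgdeg : g.natDegree = 0 := by omega
  have hglc : g.coeff 0 = 1 := by
    have hlc := hf.leadingCoeff
    rw [hg, Polynomial.leadingCoeff_mul, hmp.leadingCoeff, one_mul] at hlc
    rwa [Polynomial.leadingCoeff, hgdeg] at hlc
  have : g = 1 := by
    rw [Polynomial.eq_C_of_natDegree_eq_zero hgdeg, hglc, map_one]
  rw [hg, this, mul_one]

theorem quadratic_extension_unramified
    (T : Finset ℕ) (hT : ∀ q ∈ T, q.Prime ∧ Odd q)
    (hT3 : Odd (T.filter (fun q => q % 4 = 3)).card)
    (Q : Type) [Field Q] [NumberField Q]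
    (s : Q) (hs : s ^ 2 = ((∏ q ∈ T, q : ℕ) : Q)) (hQgen : Algebra.adjoin ℚ {s} = ⊤)
    (q : ℕ) (hq : q ∈ T)
    (L : Type) [Field L] [NumberField L] [Algebra Q L]
    (r : L) (hr : r ^ 2 = (q : L)) (hLgen : Algebra.adjoin Q {r} = ⊤) :
    ∀ (𝔭 : Ideal (𝓞 Q)) (P : Ideal (𝓞 L)), 𝔭.IsPrime → 𝔭 ≠ ⊥ → P.IsPrime → P ≠ ⊥ →
      Ideal.comap (algebraMap (𝓞 Q) (𝓞 L)) P = 𝔭 →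
      Ideal.ramificationIdx' 𝔭 P = 1 := by
  intro 𝔭 P hp hpbot hP hPbot hcomap
  have hinj : Function.Injective (algebraMap (𝓞 Q) (𝓞 L)) :=
    NumberField.RingOfIntegers.algebraMap.injective Q L
  by_cases hrange : r ∈ Set.range (algebraMap Q L)
  · -- degenerate case : L = Q
    have hbot : (⊤ : Subalgebra Q L) = ⊥ := by
      rw [← hLgen]
      refine le_bot_iff.mp (Algebra.adjoin_le ?_)
      intro x hx
      rw [Set.mem_singleton_iff] at hx
      subst hx
      exact Algebra.mem_bot.mpr hrange
    have hsurj : Function.Surjective (algebraMap Q L) := by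
      intro y
      have : y ∈ (⊥ : Subalgebra Q L) := hbot ▸ trivial
      exact Algebra.mem_bot.mp this
    have hOsurj : Function.Surjective (algebraMap (𝓞 Q) (𝓞 L)) := by
      intro y
      obtain ⟨x, hx⟩ := hsurj (algebraMap (𝓞 L) L y)
      have hxint : IsIntegral ℤ x := by
        have hy : IsIntegral ℤ (algebraMap (𝓞 L) L y) := y.isIntegral_coe
        rw [← hx] at hy
        exact (isIntegral_algebraMap_iff (algebraMap Q L).injective).mp hy
      refine ⟨⟨x, hxint⟩, ?_⟩
      apply NumberField.RingOfIntegers.coe_injective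
      rw [← hx]
      rfl
    have hmapP : Ideal.map (algebraMap (𝓞 Q) (𝓞 L)) 𝔭 = P := by
      rw [← hcomap, Ideal.map_comap_of_surjective _ hOsurj]
    refine Ideal.ramificationIdx'_spec (by rw [hmapP, pow_one]) ?_
    rw [hmapP]
    intro hle
    have hP2 : P ^ 2 = P := le_antisymm (Ideal.pow_le_self two_ne_zero) hle
    have h2 : P * P = P * ⊤ := by rw [Ideal.mul_top, ← pow_two, hP2]
    have hP0 : P ≠ 0 := hPbot
    have := mul_left_cancel₀ hP0 h2
    exact absurd this hP.ne_top
  ·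
    -- ===== non-degenerate case =====
    obtain ⟨hqp, hqodd⟩ := hT q hq
    set m' : ℕ := ∏ p ∈ T.erase q, p with hm'
    have hmm : (∏ p ∈ T, p) = q * m' := (Finset.mul_prod_erase T _ hq).symm
    have hcop : Nat.Coprime q m' := Nat.Coprime.prod_right fun p hp =>
      (Nat.coprime_primes hqp ((hT p (Finset.mem_of_mem_erase hp)).1)).mpr
      (fun h => (Finset.notMem_erase q T) (h ▸ hp))
    have hm4 : (∏ p ∈ T, p) % 4 = 3 := aux_mod4 T hT hT3
    have h43 : (q * m') % 4 = 3 := by rw [← hmm]; exact hm4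
    have hq2 : q % 2 = 1 := Nat.odd_iff.mp hqodd
    have hqm2 : (q * m') % 2 = 1 := by
      have := Nat.mod_mod_of_dvd (q * m') (by norm_num : (2:ℕ) ∣ 4)
      omega
    have hm'2 : m' % 2 = 1 := by
      have h := Nat.mul_mod q m' 2
      rw [hq2, one_mul, Nat.mod_mod_of_dvd m' (dvd_refl 2)] at h
      omega
    have hq4 : q % 4 = 1 ∨ q % 4 = 3 := by
      have := Nat.mod_mod_of_dvd q (by norm_num : (2:ℕ) ∣ 4)
      omega
    have hm'4 : m' % 4 = 1 ∨ m' % 4 = 3 := by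
      have := Nat.mod_mod_of_dvd m' (by norm_num : (2:ℕ) ∣ 4)
      omega
    have hkey4 : q % 4 = 1 ∨ m' % 4 = 1 := by
      have hmul := Nat.mul_mod q m' 4
      rw [h43] at hmul
      rcases hq4 with h | h
      · exact Or.inl h
      · rcases hm'4 with h' | h'
        · exact Or.inr h'
        · rw [h, h'] at hmul; norm_num at hmul
    have hm'0 : m' ≠ 0 := by
      rw [hm', Finset.prod_ne_zero_iff]
      exact fun p hp => ((hT p (Finset.mem_of_mem_erase hp)).1).pos.ne'
    have hq0 : (q : L) ≠ 0 := Nat.cast_ne_zero.mpr hqp.pos.ne'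
    -- ramification setup
    have hrnot : r ∉ (algebraMap Q L).range := by
      simpa [RingHom.mem_range] using hrange
    have hmapbot : Ideal.map (algebraMap (𝓞 Q) (𝓞 L)) 𝔭 ≠ ⊥ := by
      intro h
      rw [Ideal.map_eq_bot_iff_le_ker,
        NumberField.RingOfIntegers.ker_algebraMap_eq_bot] at h
      exact hpbot (le_bot_iff.mp h)
    have hle : Ideal.map (algebraMap (𝓞 Q) (𝓞 L)) 𝔭 ≤ P :=
      Ideal.map_le_iff_le_comap.mpr hcomap.ge
    have he0 : Ideal.ramificationIdx' 𝔭 P ≠ 0 :=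
      Ideal.IsDedekindDomain.ramificationIdx'_ne_zero hmapbot hP hle
    by_contra hne1
    have he2 : 2 ≤ Ideal.ramificationIdx' 𝔭 P := by omega
    have hPe : P ^ 2 ∣ Ideal.map (algebraMap (𝓞 Q) (𝓞 L)) 𝔭 :=
      dvd_trans (pow_dvd_pow P he2) (Ideal.dvd_iff_le.mpr Ideal.le_pow_ramificationIdx')
    haveI : 𝔭.IsMaximal := hp.isMaximal hpbot
    haveI : Module.IsTorsionFree (𝓞 Q) (𝓞 L) := Module.isTorsionFree_iff_algebraMap_injective.mpr hinj
    have hdiff : P ∣ differentIdeal (𝓞 Q) (𝓞 L) := by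
      simpa using pow_sub_one_dvd_differentIdeal (A := 𝓞 Q) P 2 hpbot hPe
    -- contradiction from coprime naturals both in P
    have coprime_contra : ∀ a b : ℕ, Nat.Coprime a b →
        ((a : 𝓞 L) ∈ P) → ((b : 𝓞 L) ∈ P) → False := by
      intro a b hab ha hb
      obtain ⟨u, v, huv⟩ := (Nat.isCoprime_iff_coprime.mpr hab).map (algebraMap ℤ (𝓞 L))
      have h1 : (1 : 𝓞 L) ∈ P := by
        rw [← huv]
        exact P.add_mem (P.mul_mem_left _ (by simpa using ha))
          (P.mul_mem_left _ (by simpa using hb))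
      exact hP.ne_top ((Ideal.eq_top_iff_one P).mpr h1)
    -- key : quadratic generators give derivative values in P
    have key : ∀ (θ : 𝓞 L) (f : Q[X]), f.Monic → f.natDegree = 2 →
        aeval (algebraMap (𝓞 L) L θ) f = 0 →
        (algebraMap (𝓞 L) L θ) ∉ (algebraMap Q L).range →
        Algebra.adjoin Q {algebraMap (𝓞 L) L θ} = ⊤ →
        ∀ v : 𝓞 L, algebraMap (𝓞 L) L v = aeval (algebraMap (𝓞 L) L θ) (derivative f) →
        v ∈ P := by
      intro θ f hmon hdeg h0 hnot hadj v hv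
      have hintθ : IsIntegral (𝓞 Q) θ := Algebra.IsIntegral.isIntegral θ
      have hmem : aeval θ (derivative (minpoly (𝓞 Q) θ)) ∈ differentIdeal (𝓞 Q) (𝓞 L) :=
        aeval_derivative_mem_differentIdeal (𝓞 Q) Q L θ hadj
      have hmin : minpoly Q (algebraMap (𝓞 L) L θ) = (minpoly (𝓞 Q) θ).map (algebraMap (𝓞 Q) Q) :=
        minpoly.isIntegrallyClosed_eq_field_fractions Q L hintθ
      have hminf : minpoly Q (algebraMap (𝓞 L) L θ) = f := aux_minpoly_quadratic hmon hdeg h0 hnot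
      have himg : algebraMap (𝓞 L) L (aeval θ (derivative (minpoly (𝓞 Q) θ)))
          = aeval (algebraMap (𝓞 L) L θ) (derivative f) := by
        rw [← hminf, hmin, derivative_map, aeval_map_algebraMap, aeval_algebraMap_apply]
      have hveq : v = aeval θ (derivative (minpoly (𝓞 Q) θ)) :=
        NumberField.RingOfIntegers.coe_injective (by rw [hv, ← himg])
      rw [hveq]
      exact (Ideal.le_of_dvd hdiff) hmem
    -- square-root generators
    have sqgen : ∀ (a : ℕ) (w : L), w ^ 2 = (a : L) →
        w ∉ (algebraMap Q L).range → Algebra.adjoin Q {w} = ⊤ →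
        (((2 : 𝓞 L) ∈ P ∨ ((a : ℕ) : 𝓞 L) ∈ P) ∧
          (a % 4 = 1 → (2 : 𝓞 L) ∈ P → False)) := by
      intro a w hw hwnot hwadj
      have hwint : IsIntegral ℤ w := by
        refine ⟨X ^ 2 - C (a : ℤ), monic_X_pow_sub_C _ two_ne_zero, ?_⟩
        simp [hw]
      set W : 𝓞 L := ⟨w, hwint⟩ with hWdef
      have hWcoe : algebraMap (𝓞 L) L W = w := rfl
      have hWsq : W ^ 2 = ((a : ℕ) : 𝓞 L) := by
        apply NumberField.RingOfIntegers.coe_injective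
        rw [map_pow, map_natCast, hWcoe, hw]
      have hWP : W ∈ P → ((a : ℕ) : 𝓞 L) ∈ P := by
        intro h
        rw [← hWsq, pow_two]
        exact P.mul_mem_left _ h
      have hder1 : aeval w (derivative (X ^ 2 - C (a : Q))) = 2 * w := by
        simp [derivative_sub, derivative_X_pow, map_ofNat]
        exact Or.inl one_add_one_eq_two
      have h2W : (2 : 𝓞 L) * W ∈ P := by
        refine key W (X ^ 2 - C (a : Q)) (monic_X_pow_sub_C _ two_ne_zero)
          (by compute_degree!) ?_ (by rw [hWcoe]; exact hwnot) (by rw [hWcoe]; exact hwadj)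
          ((2 : 𝓞 L) * W) ?_
        · rw [hWcoe]
          simp [hw]
        · rw [hWcoe, map_mul, map_ofNat, hWcoe, hder1]
      constructor
      · rcases hP.mem_or_mem h2W with h | h
        · exact Or.inl h
        · exact Or.inr (hWP h)
      · intro ha4 h2
        have ha2 : a % 2 = 1 := by
          have := Nat.mod_mod_of_dvd a (by norm_num : (2:ℕ) ∣ 4)
          omega
        set k : ℕ := a / 4 with hk
        have hak : a = 4 * k + 1 := by omega
        have haL : (a : L) = 4 * (k : L) + 1 := by exact_mod_cast congrArg (Nat.cast (R := L)) hak
        set θ : L := (1 + w) / 2 with hθ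
        have hwθ : w = 2 * θ - 1 := by
          rw [hθ]
          field_simp
          ring
        have hθeq : θ ^ 2 - θ - (k : L) = 0 := by
          rw [hθ]
          field_simp
          linear_combination hw + haL
        have hkZ : algebraMap ℤ L ((k : ℕ) : ℤ) = (k : L) := map_natCast _ k
        have hθint : IsIntegral ℤ θ := by
          refine ⟨X ^ 2 - X - C ((k : ℕ) : ℤ), by monicity!, ?_⟩
          simp only [eval₂_sub, eval₂_X_pow, eval₂_X, eval₂_C, hkZ]
          exact hθeq
        set Θ : 𝓞 L := ⟨θ, hθint⟩ with hΘdef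
        have hΘcoe : algebraMap (𝓞 L) L Θ = θ := rfl
        have hθnot : θ ∉ (algebraMap Q L).range := by
          rintro ⟨x, hx⟩
          exact hwnot ⟨2 * x - 1, by rw [map_sub, map_mul, map_ofNat, map_one, hx, ← hwθ]⟩
        have hθadj : Algebra.adjoin Q {θ} = ⊤ := by
          rw [eq_top_iff, ← hwadj]
          refine Algebra.adjoin_le ?_
          intro x hx
          rw [Set.mem_singleton_iff] at hx
          subst hx
          rw [hwθ]
          refine sub_mem (mul_mem ?_ (Algebra.self_mem_adjoin_singleton Q θ)) (one_mem _)
          have h2alg : (2 : L) = algebraMap Q L 2 := (map_ofNat (algebraMap Q L) 2).symm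
          rw [h2alg]
          exact Subalgebra.algebraMap_mem _ _
        have hder3 : aeval θ (derivative (X ^ 2 - X - C ((k : ℕ) : Q))) = 2 * θ - 1 := by
          simp [derivative_sub, derivative_X_pow, map_ofNat]
          exact Or.inl one_add_one_eq_two
        have hWinP : W ∈ P := by
          refine key Θ (X ^ 2 - X - C ((k : ℕ) : Q)) (by monicity!) (by compute_degree!)
            ?_ (by rw [hΘcoe]; exact hθnot) (by rw [hΘcoe]; exact hθadj) W ?_
          · rw [hΘcoe]
            simp only [map_sub, aeval_X_pow, aeval_X, aeval_C, map_natCast]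
            exact hθeq
          · rw [hΘcoe, hWcoe, hder3, ← hwθ]
        exact coprime_contra 2 a ((Nat.prime_two.coprime_iff_not_dvd).mpr (by omega))
          h2 (hWP hWinP)
    -- the two square-root generators r and t
    have hsL : (algebraMap Q L s) ^ 2 = ((∏ p ∈ T, p : ℕ) : L) := by
      rw [← map_pow, hs, map_natCast]
    have hprod0 : ((∏ p ∈ T, p : ℕ) : L) ≠ 0 := by
      rw [hmm]
      push_cast
      exact mul_ne_zero hq0 (Nat.cast_ne_zero.mpr hm'0)
    have hsne : algebraMap Q L s ≠ 0 := by
      intro h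
      apply hprod0
      rw [← hsL, h]
      norm_num
    set t : L := algebraMap Q L s * r * (q : L)⁻¹ with ht
    have ht2 : t ^ 2 = (m' : L) := by
      rw [ht]
      have : (algebraMap Q L s * r * (q : L)⁻¹) ^ 2
          = (algebraMap Q L s) ^ 2 * r ^ 2 * ((q : L) ^ 2)⁻¹ := by
        rw [mul_pow, mul_pow, inv_pow]
      rw [this, hsL, hr, hmm]
      push_cast
      field_simp
    have hrt : r = algebraMap Q L ((q : Q) / s) * t := by
      rw [ht, map_div₀, map_natCast]
      field_simp
    have htnot : t ∉ (algebraMap Q L).range := by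
      rintro ⟨x, hx⟩
      refine hrnot ⟨(q : Q) / s * x, ?_⟩
      rw [map_mul, hx, ← hrt]
    have htadj : Algebra.adjoin Q {t} = ⊤ := by
      rw [eq_top_iff, ← hLgen]
      refine Algebra.adjoin_le ?_
      intro x hx
      rw [Set.mem_singleton_iff] at hx
      subst hx
      rw [hrt]
      exact mul_mem (Subalgebra.algebraMap_mem _ _) (Algebra.self_mem_adjoin_singleton Q t)
    have H1 := sqgen q r hr hrnot hLgen
    have H2 := sqgen m' t ht2 htnot htadj
    by_cases h2P : (2 : 𝓞 L) ∈ P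
    · rcases hkey4 with h | h
      · exact H1.2 h h2P
      · exact H2.2 h h2P
    · exact coprime_contra q m' hcop (H1.1.resolve_left h2P) (H2.1.resolve_left h2P)
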